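/- Let (Uₜ)ₜ∈ℝ be a reflection positive strongly continuous unitary one-parameter group on (E, E₊, θ) such that E₊ is U-cyclic. Then the space E_fix of vectors fixed by all Uₜ is contained in E₀ = {v ∈ E₊ : θv = v}. -/

import Mathlib

local notation "⟪" x ", " y "⟫" => @inner ℂ _ _ x y

/-- Let `(Uₜ)` be a reflection positive strongly continuous unitary one-parameter group on
`(E, E₊, θ)` such that `E₊` is `U`-cyclic.  Then the fixed space
`E_fix = {v : Uₜ v = v ∀ t}` is contained in `E₀ = {v ∈ E₊ : θ v = v}`. -/
theorem statement5
    {E : Type*} [NormedAddCommGroup E] [InnerProductSpace ℂ E] [CompleteSpace E]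
    (θ : E ≃ₗᵢ[ℂ] E) (hθinv : ∀ v : E, θ (θ v) = v)
    (Eplus : Submodule ℂ E) (hclosed : IsClosed (Eplus : Set E))
    (hpos : ∀ v ∈ Eplus, ∃ r : ℝ, 0 ≤ r ∧ ⟪θ v, v⟫ = (r : ℂ))
    (U : ℝ → (E ≃ₗᵢ[ℂ] E))
    (hgrp : ∀ s t : ℝ, ∀ v : E, U (s + t) v = U s (U t v))
    (hU0 : ∀ v : E, U 0 v = v)
    (hcont : ∀ v : E, Continuous fun t : ℝ => U t v)
    (hinvplus : ∀ t : ℝ, 0 ≤ t → ∀ v ∈ Eplus, U t v ∈ Eplus)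
    (hθU : ∀ t : ℝ, ∀ v : E, θ (U t (θ v)) = U (-t) v)
    (hcyc : Dense (Submodule.span ℂ (⋃ t : ℝ, U t '' (Eplus : Set E)) : Set E)) :
    ∀ v : E, (∀ t : ℝ, U t v = v) → v ∈ Eplus ∧ θ v = v := by
  letI : InnerProductSpace ℝ E := InnerProductSpace.complexToReal
  -- the fixed subspace
  let Fsub : Submodule ℂ E :=
    { carrier := {v : E | ∀ t : ℝ, U t v = v}
      add_mem' := fun ha hb t => by rw [map_add, ha t, hb t]
      zero_mem' := fun t => map_zero (U t)
      smul_mem' := fun c x hx t => by rw [map_smul, hx t] }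
  have hmem : ∀ x : E, x ∈ Fsub ↔ ∀ t : ℝ, U t x = x := fun x => Iff.rfl
  have hFclosed : IsClosed (Fsub : Set E) := by
    have : (Fsub : Set E) = ⋂ t : ℝ, {v : E | U t v = v} := by
      ext x; simp [hmem]
    rw [this]
    exact isClosed_iInter fun t => isClosed_eq (U t).continuous continuous_id
  haveI : CompleteSpace Fsub := hFclosed.completeSpace_coe
  -- inner products with fixed vectors are invariant
  have hfixinner : ∀ u : E, u ∈ Fsub → ∀ (x : E) (t : ℝ), ⟪u, U t x⟫ = ⟪u, x⟫ := by
    intro u hu x t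
    nth_rewrite 1 [← (hmem u).1 hu t]
    exact (U t).inner_map_map u x
  -- orthogonal projection onto the fixed space is `U`-invariant
  have hsub_orth : ∀ (x : E) (t : ℝ), U t x - x ∈ Fsubᗮ := by
    intro x t
    rw [Submodule.mem_orthogonal]
    intro u hu
    rw [inner_sub_right, hfixinner u hu x t, sub_self]
  have hPU : ∀ (x : E) (t : ℝ),
      (Fsub.orthogonalProjectionOnto (U t x) : E) = Fsub.orthogonalProjectionOnto x := by
    intro x t
    refine Submodule.eq_starProjection_of_mem_orthogonal (Fsub.orthogonalProjectionOnto x).2 ?_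
    have h : U t x - (Fsub.orthogonalProjectionOnto x : E)
        = (U t x - x) + (x - (Fsub.orthogonalProjectionOnto x : E)) := by abel
    rw [h]
    exact Submodule.add_mem _ (hsub_orth x t) (Submodule.sub_starProjection_mem_orthogonal x)
  -- real linearity of U s
  have hlin : ∀ s : ℝ, IsLinearMap ℝ (fun x : E => U s x) := fun s =>
    ⟨fun a b => map_add _ a b, fun c a => by
      rw [RCLike.real_smul_eq_coe_smul (K := ℂ), RCLike.real_smul_eq_coe_smul (K := ℂ), map_smul]⟩
  -- the projection of an element of `Eplus` onto the fixed space stays in `Eplus`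
  have hproj_mem : ∀ w ∈ Eplus, (Fsub.orthogonalProjectionOnto w : E) ∈ Eplus := by
    intro w hw
    set orb : Set E := (fun t : ℝ => U t w) '' Set.Ici 0 with horb
    set C : Set E := closure (convexHull ℝ orb) with hC
    have horb_sub : orb ⊆ (Eplus : Set E) := by
      rintro _ ⟨t, ht, rfl⟩; exact hinvplus t ht w hw
    have hEconvex : Convex ℝ (Eplus : Set E) := (Eplus.restrictScalars ℝ).convex
    have hCsub : C ⊆ (Eplus : Set E) := by
      rw [hC, ← hclosed.closure_eq]
      exact closure_mono (convexHull_min horb_sub hEconvex)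
    have hwC : w ∈ C :=
      subset_closure (subset_convexHull ℝ _ ⟨0, le_refl (0 : ℝ), hU0 w⟩)
    have hCconv : Convex ℝ C := (convex_convexHull ℝ orb).closure
    have hCclosed : IsClosed C := isClosed_closure
    -- `C` is invariant under `U s` for `s ≥ 0`
    have hUC : ∀ s : ℝ, 0 ≤ s → ∀ x ∈ C, U s x ∈ C := by
      intro s hs x hx
      have himg : (fun x : E => U s x) '' orb ⊆ orb := by
        rintro _ ⟨_, ⟨t, ht, rfl⟩, rfl⟩
        exact ⟨s + t, add_nonneg hs ht, hgrp s t w⟩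
      have h1 : U s x ∈ closure ((fun x : E => U s x) '' (convexHull ℝ orb)) :=
        map_mem_closure (U s).continuous hx (Set.mapsTo_image _ _)
      have h2 : (fun x : E => U s x) '' (convexHull ℝ orb) ⊆ convexHull ℝ orb := by
        rw [(hlin s).image_convexHull]
        exact convexHull_mono himg
      exact closure_mono h2 h1
    -- minimal norm element of `C`
    obtain ⟨m, hmC, hmmin⟩ :=
      exists_norm_eq_iInf_of_complete_convex ⟨w, hwC⟩ hCclosed.isComplete hCconv 0
    set δ : ℝ := ⨅ x : C, ‖(0 : E) - x‖ with hδ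
    have hδle : ∀ x ∈ C, δ ≤ ‖x‖ := by
      intro x hx
      have h := ciInf_le (f := fun x : C => ‖(0 : E) - x‖)
        ⟨0, by rintro _ ⟨y, rfl⟩; exact norm_nonneg _⟩ ⟨x, hx⟩
      rw [hδ]
      exact h.trans (le_of_eq (by simp))
    have hδm : ‖m‖ = δ := by rw [← hmmin]; simp
    have hδ0 : (0 : ℝ) ≤ δ := hδm ▸ norm_nonneg m
    have hkey : ∀ s : ℝ, 0 ≤ s → U s m = m := by
      intro s hs
      have h1 : U s m ∈ C := hUC s hs m hmC
      have h2 : ‖U s m‖ = ‖m‖ := (U s).norm_map m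
      have hmid : (1/2 : ℝ) • m + (1/2 : ℝ) • U s m ∈ C :=
        hCconv hmC h1 (by norm_num) (by norm_num) (by norm_num)
      have h3 : δ ≤ ‖(1/2 : ℝ) • m + (1/2 : ℝ) • U s m‖ := hδle _ hmid
      have h4 : (1/2 : ℝ) • m + (1/2 : ℝ) • U s m = (1/2 : ℝ) • (m + U s m) := by
        rw [smul_add]
      have h5 : ‖(1/2 : ℝ) • (m + U s m)‖ = (1/2 : ℝ) * ‖m + U s m‖ := by
        rw [norm_smul]; norm_num
      have hpar := parallelogram_law_with_norm ℂ m (U s m)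
      rw [h4, h5] at h3
      have h8 : 4 * δ * δ ≤ ‖m + U s m‖ * ‖m + U s m‖ := by
        nlinarith [norm_nonneg (m + U s m)]
      have h9 : ‖m - U s m‖ * ‖m - U s m‖ ≤ 0 := by nlinarith
      have h6 : ‖m - U s m‖ = 0 :=
        mul_self_eq_zero.1 (le_antisymm h9 (mul_self_nonneg _))
      exact (sub_eq_zero.1 (norm_eq_zero.1 h6)).symm
    have hmfix : ∀ t : ℝ, U t m = m := by
      intro t
      rcases le_or_gt 0 t with ht | ht
      · exact hkey t ht
      · have h1 : U (-t) m = m := hkey (-t) (by linarith)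
        have h2 : U (t + -t) m = U t (U (-t) m) := hgrp t (-t) m
        rw [add_neg_cancel, hU0, h1] at h2
        exact h2.symm
    have hmF : m ∈ Fsub := (hmem m).2 hmfix
    -- `w - m` is orthogonal to the fixed space
    have horth : ∀ x ∈ Fsub, ⟪w - m, x⟫ = 0 := by
      intro u hu
      have hA : C ⊆ {x : E | ⟪u, x⟫ = ⟪u, w⟫} := by
        have hlinu : IsLinearMap ℝ (fun x : E => ⟪u, x⟫) :=
          ⟨fun a b => inner_add_right u a b, fun c x => by
            rw [RCLike.real_smul_eq_coe_smul (K := ℂ) c, inner_smul_real_right]⟩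
        have hAconv : Convex ℝ {x : E | ⟪u, x⟫ = ⟪u, w⟫} := by
          have hset : {x : E | ⟪u, x⟫ = ⟪u, w⟫} = (fun x : E => ⟪u, x⟫) ⁻¹' {⟪u, w⟫} := by
            ext x; simp
          rw [hset]
          exact (convex_singleton _).is_linear_preimage hlinu
        have hAclosed : IsClosed {x : E | ⟪u, x⟫ = ⟪u, w⟫} :=
          isClosed_eq (continuous_const.inner continuous_id) continuous_const
        have horbA : orb ⊆ {x : E | ⟪u, x⟫ = ⟪u, w⟫} := by
          rintro _ ⟨t, ht, rfl⟩
          exact hfixinner u hu w t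
        exact closure_minimal (convexHull_min horbA hAconv) hAclosed
      have hm' : ⟪u, m⟫ = ⟪u, w⟫ := hA hmC
      have h0 : ⟪u, w - m⟫ = 0 := by rw [inner_sub_right, hm', sub_self]
      rw [← inner_conj_symm, h0, map_zero]
    have : (Fsub.orthogonalProjectionOnto w : E) = m :=
      Submodule.eq_starProjection_of_mem_of_inner_eq_zero hmF horth
    rw [this]
    exact hCsub hmC
  -- main claim: fixed vectors lie in `Eplus`
  have main : ∀ v : E, (∀ t : ℝ, U t v = v) → v ∈ Eplus := by
    intro v hv
    set Q : E →L[ℂ] E := Fsub.subtypeL.comp (Fsub.orthogonalProjectionOnto) with hQdef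
    have hQv : Q v = v := by
      show (Fsub.orthogonalProjectionOnto v : E) = v
      exact Submodule.starProjection_eq_self_iff.2 ((hmem v).2 hv)
    have hQspan : ∀ x ∈ Submodule.span ℂ (⋃ t : ℝ, U t '' (Eplus : Set E)), Q x ∈ Eplus := by
      intro x hx
      induction hx using Submodule.span_induction with
      | mem x h =>
        obtain ⟨_, ⟨t, rfl⟩, w, hw, rfl⟩ := h
        show (Fsub.orthogonalProjectionOnto (U t w) : E) ∈ Eplus
        rw [hPU w t]
        exact hproj_mem w hw
      | zero => rw [map_zero]; exact Eplus.zero_mem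
      | add x y hx hy ihx ihy => rw [map_add]; exact Eplus.add_mem ihx ihy
      | smul c x hx ih => rw [map_smul]; exact Eplus.smul_mem c ih
    have hvcl : v ∈ closure (Submodule.span ℂ (⋃ t : ℝ, U t '' (Eplus : Set E)) : Set E) := by
      rw [hcyc.closure_eq]; trivial
    have hQv' : Q v ∈ closure (Eplus : Set E) :=
      map_mem_closure Q.continuous hvcl hQspan
    rwa [hQv, hclosed.closure_eq] at hQv'
  -- conclusion
  intro v hv
  have hv1 : v ∈ Eplus := main v hv
  have hθfix : ∀ t : ℝ, U t (θ v) = θ v := by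
    intro t
    have h := hθU t v
    rw [hv (-t)] at h
    have h2 := congrArg θ h
    rwa [hθinv] at h2
  have hv2 : θ v ∈ Eplus := main (θ v) hθfix
  have hxE : v - θ v ∈ Eplus := Eplus.sub_mem hv1 hv2
  obtain ⟨r, hr, hrx⟩ := hpos (v - θ v) hxE
  have hθx : θ (v - θ v) = -(v - θ v) := by
    rw [map_sub, hθinv, neg_sub]
  rw [hθx, inner_neg_left, inner_self_eq_norm_sq_to_K] at hrx
  rw [← RCLike.ofReal_pow, ← RCLike.ofReal_neg] at hrx
  have hnorm : ‖v - θ v‖ ^ 2 = -r := by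
    have h2 : (-(‖v - θ v‖ ^ 2) : ℝ) = r := RCLike.ofReal_inj.mp hrx
    linarith
  have hzero : v - θ v = 0 := by
    have h1 : ‖v - θ v‖ ^ 2 ≤ 0 := by rw [hnorm]; linarith
    have h2 : 0 ≤ ‖v - θ v‖ ^ 2 := sq_nonneg _
    have : ‖v - θ v‖ = 0 := by nlinarith
    exact norm_eq_zero.1 this
  exact ⟨hv1, (sub_eq_zero.1 hzero).symm⟩
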